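/- Let v, ṽ be words with |ṽ| = |v| + ab for positive integers a, b, such that v begins at position 1 + ja in ṽ for each j = 0, …, b, and every occurrence of v in x is contained in an occurrence of ṽ. Then for any L, D_L(v,x) ≥ D_L(ṽ,x)/(4L + 8a/|v|) and D_L(ṽ,x) ≥ (1/27)·D_L(v,x). -/

import Mathlib

/-- The word `w` occurs in `x` beginning at (0-indexed) position `i`. -/
def occursAt {A : Type*} (x : ℕ → A) (w : List A) (i : ℕ) : Prop :=
  ∀ k, k < w.length → w[k]? = some (x (i + k))
open Classical in
/-- Indicator that `w` begins somewhere in the `j`-th consecutive block of length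
`L * |w|` of `x` (blocks indexed from `j = 0`). -/
noncomputable def rBlock {A : Type*} (L : ℕ) (w : List A) (x : ℕ → A) (j : ℕ) : ℕ :=
  if ∃ i, j * (L * w.length) ≤ i ∧ i < (j + 1) * (L * w.length) ∧ occursAt x w i
  then 1 else 0

/-- The sum function `S_{L,N}(w,x)`. -/
noncomputable def sumFn {A : Type*} (L : ℕ) (w : List A) (x : ℕ → A) (N : ℕ) : ℕ :=
  ∑ j ∈ Finset.range N, rBlock L w x j

/-- The disjoint upper density `D_L(w,x)`. -/
noncomputable def densD {A : Type*} (L : ℕ) (w : List A) (x : ℕ → A) : ℝ :=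
  Filter.limsup (fun N => (sumFn L w x N : ℝ) / N) Filter.atTop


open Filter

/-- Block predicate. -/
def PB {A : Type*} (L : ℕ) (w : List A) (x : ℕ → A) (j : ℕ) : Prop :=
  ∃ i, j * (L * w.length) ≤ i ∧ i < (j + 1) * (L * w.length) ∧ occursAt x w i

open Classical in
lemma sumFn_eq_card {A : Type*} (L : ℕ) (w : List A) (x : ℕ → A) (N : ℕ) :
    sumFn L w x N = ((Finset.range N).filter (PB L w x)).card := by
  rw [Finset.card_filter]
  rfl

lemma sumFn_le {A : Type*} (L : ℕ) (w : List A) (x : ℕ → A) (N : ℕ) :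
    sumFn L w x N ≤ N := by
  have : ∀ j, rBlock L w x j ≤ 1 := by
    intro j; unfold rBlock; split <;> simp
  calc sumFn L w x N ≤ ∑ _j ∈ Finset.range N, 1 := Finset.sum_le_sum fun j _ => this j
    _ = N := by simp

lemma occursAt_nested {A : Type*} {v tv : List A} {x : ℕ → A} {a b : ℕ}
    (hlen : tv.length = v.length + a * b)
    (hpos : ∀ j, j ≤ b → ((tv.drop (j * a)).take v.length) = v)
    {i p : ℕ} (hi : i ≤ b) (h : occursAt x tv p) : occursAt x v (p + i * a) := by
  intro k hk
  have h2 : i * a + k < tv.length := by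
    have : i * a ≤ a * b := by rw [mul_comm]; exact Nat.mul_le_mul_left a hi
    omega
  calc v[k]? = ((tv.drop (i * a)).take v.length)[k]? := by rw [hpos i hi]
    _ = (tv.drop (i * a))[k]? := by rw [List.getElem?_take, if_pos hk]
    _ = tv[i * a + k]? := List.getElem?_drop
    _ = some (x (p + (i * a + k))) := h _ h2
    _ = some (x (p + i * a + k)) := by rw [Nat.add_assoc]

lemma nat_add_div_le {a b c : ℕ} (hc : 0 < c) : a / c + b / c ≤ (a + b) / c := by
  rw [Nat.le_div_iff_mul_le hc, add_mul]
  exact add_le_add (Nat.div_mul_le_self a c) (Nat.div_mul_le_self b c)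

lemma count2 {A : Type*} (v tv : List A) (x : ℕ → A) (a b L : ℕ)
    (hL : 0 < L) (hv : 0 < v.length)
    (hlen : tv.length = v.length + a * b)
    (hcont : ∀ p, occursAt x v p →
      ∃ p', p' ≤ p ∧ p + v.length ≤ p' + tv.length ∧ occursAt x tv p') (N : ℕ) :
    sumFn L v x N ≤ ((L * tv.length + a * b) / (L * v.length) + 2) *
      sumFn L tv x (N * v.length / tv.length + 1) := by
  classical
  set ℓ := v.length with hℓ
  set lt := tv.length with hltdef
  have hlt : 0 < lt := by omega
  set d := L * ℓ with hd'
  set dt := L * lt with hdt'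
  have hd : 0 < d := Nat.mul_pos hL hv
  have hdt : 0 < dt := Nat.mul_pos hL hlt
  set m := (dt + a * b) / d + 2 with hm'
  set M := N * ℓ / lt + 1 with hM'
  rw [sumFn_eq_card, sumFn_eq_card]
  -- choose witnesses
  have Hw : ∀ j : ℕ, ∃ q : ℕ × ℕ, PB L v x j →
      (j * d ≤ q.1 ∧ q.1 < (j + 1) * d ∧ q.2 ≤ q.1 ∧ q.1 + ℓ ≤ q.2 + lt ∧
        occursAt x tv q.2) := by
    intro j
    by_cases h : PB L v x j
    · obtain ⟨i, h1, h2, h3⟩ := h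
      obtain ⟨p', hp1, hp2, hp3⟩ := hcont i h3
      exact ⟨(i, p'), fun _ => ⟨h1, h2, hp1, hp2, hp3⟩⟩
    · exact ⟨(0, 0), fun hc => absurd hc h⟩
  choose q hq using Hw
  have key : ∀ j ∈ (Finset.range N).filter (PB L v x),
      (q j).2 / dt ∈ (Finset.range M).filter (PB L tv x) := by
    intro j hj
    simp only [Finset.mem_filter, Finset.mem_range] at hj ⊢
    obtain ⟨h1, h2, h3, h4, h5⟩ := hq j hj.2
    have hdiv1 : ((q j).2 / dt) * dt ≤ (q j).2 := Nat.div_mul_le_self _ _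
    have hdiv2 : (q j).2 < ((q j).2 / dt + 1) * dt := by
      rw [← Nat.div_lt_iff_lt_mul hdt]; omega
    constructor
    · -- range bound
      have e2 : (q j).2 < N * d := by
        have : (j + 1) * d ≤ N * d := Nat.mul_le_mul_right d hj.1
        omega
      have e1 : ((q j).2 / dt) * lt * L ≤ (q j).2 := by
        calc ((q j).2 / dt) * lt * L = ((q j).2 / dt) * dt := by rw [hdt']; ring
          _ ≤ (q j).2 := hdiv1
      have e3 : ((q j).2 / dt) * lt * L < (N * ℓ) * L := by
        calc ((q j).2 / dt) * lt * L ≤ (q j).2 := e1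
          _ < N * d := e2
          _ = (N * ℓ) * L := by rw [hd']; ring
      have e4 : ((q j).2 / dt) * lt < N * ℓ := lt_of_mul_lt_mul_right e3 (Nat.zero_le L)
      have : (q j).2 / dt ≤ N * ℓ / lt := (Nat.le_div_iff_mul_le hlt).mpr (le_of_lt e4)
      omega
    · exact ⟨(q j).2, hdiv1, hdiv2, h5⟩
  apply Finset.card_le_mul_card_image_of_maps_to (f := fun j => (q j).2 / dt) key
  intro j' _
  -- fiber bound
  set j0 := j' * dt / d with hj0
  have hsub : (Finset.filter (fun j => (q j).2 / dt = j') ((Finset.range N).filter (PB L v x)))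
      ⊆ Finset.Ico j0 (j0 + m) := by
    intro j hj
    simp only [Finset.mem_filter, Finset.mem_range] at hj
    obtain ⟨⟨hjN, hPB⟩, hFj⟩ := hj
    obtain ⟨h1, h2, h3, h4, h5⟩ := hq j hPB
    have hp'lo : j' * dt ≤ (q j).2 := by
      rw [← hFj]; exact Nat.div_mul_le_self _ _
    have hp'hi : (q j).2 < (j' + 1) * dt := by
      rw [← hFj, ← Nat.div_lt_iff_lt_mul hdt]; omega
    simp only [Finset.mem_Ico]
    constructor
    · -- j0 ≤ j
      have : j' * dt < (j + 1) * d := lt_of_le_of_lt (le_trans hp'lo h3) h2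
      have := (Nat.div_lt_iff_lt_mul hd).mpr this
      omega
    · -- j < j0 + m
      have hi_le : (q j).1 ≤ (q j).2 + a * b := by omega
      have hkey : j * d < (j0 + m) * d := by
        have s1 : j * d ≤ (q j).2 + a * b := le_trans h1 hi_le
        have s2 : (q j).2 + a * b < (j' + 1) * dt + a * b := by omega
        have s3 : j' * dt < (j0 + 1) * d := by
          rw [← Nat.div_lt_iff_lt_mul hd]; omega
        have s4 : dt + a * b < ((dt + a * b) / d + 1) * d := by
          rw [← Nat.div_lt_iff_lt_mul hd]; omega
        calc j * d ≤ (q j).2 + a * b := s1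
          _ < (j' + 1) * dt + a * b := s2
          _ = j' * dt + (dt + a * b) := by ring
          _ < (j0 + 1) * d + ((dt + a * b) / d + 1) * d := Nat.add_lt_add s3 s4
          _ = (j0 + m) * d := by rw [hm']; ring
      exact lt_of_mul_lt_mul_right hkey (Nat.zero_le d)
  calc (Finset.filter (fun j => (q j).2 / dt = j') ((Finset.range N).filter (PB L v x))).card
      ≤ (Finset.Ico j0 (j0 + m)).card := Finset.card_le_card hsub
    _ = m := by rw [Nat.card_Ico, Nat.add_sub_cancel_left]

lemma count1 {A : Type*} (v tv : List A) (x : ℕ → A) (a b L : ℕ)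
    (ha : 0 < a) (hL : 0 < L) (hv : 0 < v.length)
    (hlen : tv.length = v.length + a * b)
    (hpos : ∀ j, j ≤ b → ((tv.drop (j * a)).take v.length) = v) (N : ℕ) :
    (if a ≤ L * v.length then a * b / (L * v.length) + 1 else b + 1) * sumFn L tv x N ≤
      2 * sumFn L v x ((N + 1) * (L * tv.length) / (L * v.length) + 1) := by
  classical
  set ℓ := v.length with hℓ
  set lt := tv.length with hltdef
  have hlt : 0 < lt := by omega
  set d := L * ℓ with hd'
  set dt := L * lt with hdt'
  have hd : 0 < d := Nat.mul_pos hL hv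
  have hdt : 0 < dt := Nat.mul_pos hL hlt
  have habdt : a * b + d ≤ dt := by
    have h1 : dt = d + L * (a * b) := by rw [hdt', hd', hlen]; ring
    have h2 : a * b ≤ L * (a * b) := Nat.le_mul_of_pos_left _ hL
    omega
  set c' := if a ≤ d then a * b / d + 1 else b + 1 with hc'
  set M' := (N + 1) * dt / d + 1 with hM'
  rw [sumFn_eq_card, sumFn_eq_card]
  set s := (Finset.range N).filter (PB L tv x) with hs
  set t := (Finset.range M').filter (PB L v x) with ht
  have Hw : ∀ j' : ℕ, ∃ u : ℕ, PB L tv x j' →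
      (j' * dt ≤ u ∧ u < (j' + 1) * dt ∧ occursAt x tv u) := by
    intro j'
    by_cases h : PB L tv x j'
    · obtain ⟨i, h1, h2, h3⟩ := h
      exact ⟨i, fun _ => ⟨h1, h2, h3⟩⟩
    · exact ⟨0, fun hc => absurd hc h⟩
  choose w hw using Hw
  set G : ℕ × ℕ → ℕ :=
    fun pr => if a ≤ d then (w pr.1) / d + pr.2 else (w pr.1 + pr.2 * a) / d with hG
  have hmaps : ∀ pr ∈ s ×ˢ Finset.range c', G pr ∈ t := by
    rintro ⟨j', t'⟩ hpr
    rw [Finset.mem_product, hs, Finset.mem_filter, Finset.mem_range, Finset.mem_range] at hpr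
    obtain ⟨⟨hj'N, hPB⟩, ht'⟩ := hpr
    obtain ⟨hu1, hu2, hu3⟩ := hw j' hPB
    set u := w j' with hu'
    have huN : u + a * b < (N + 1) * dt := by
      have : (j' + 1) * dt ≤ N * dt := Nat.mul_le_mul_right dt hj'N
      have : u < N * dt := by omega
      have h2 : N * dt + dt = (N + 1) * dt := by ring
      omega
    rw [ht, Finset.mem_filter, Finset.mem_range]
    by_cases hcase : a ≤ d
    · -- G = u/d + t'
      have hGv : G (j', t') = u / d + t' := by rw [hG]; simp [hcase, hu']
      have ht'2 : t' ≤ a * b / d := by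
        rw [hc'] at ht'; simp [hcase] at ht'; omega
      constructor
      · -- range
        rw [hGv]
        have e1 : u / d + t' ≤ u / d + a * b / d := by omega
        have e2 : u / d + a * b / d ≤ (u + a * b) / d := nat_add_div_le hd
        have e3 : (u + a * b) / d ≤ (N + 1) * dt / d :=
          Nat.div_le_div_right (le_of_lt huN)
        omega
      · -- PB
        rw [hGv]
        obtain ⟨k, hkdef⟩ : ∃ k, k = u / d := ⟨_, rfl⟩
        have hk1 : k * d ≤ u := by rw [hkdef]; exact Nat.div_mul_le_self u d
        have hk2 : u < (k + 1) * d := by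
          rw [hkdef, ← Nat.div_lt_iff_lt_mul hd]; omega
        rw [← hkdef]
        rcases Nat.eq_zero_or_pos t' with h0 | hpos'
        · subst h0
          have e0 : (k + 0) * (L * v.length) = k * d := by rw [Nat.add_zero, hd', hℓ]
          have e1 : (k + 0 + 1) * (L * v.length) = (k + 1) * d := by rw [Nat.add_zero, hd', hℓ]
          refine ⟨u, by omega, by omega, ?_⟩
          have := occursAt_nested hlen hpos (Nat.zero_le b) hu3
          simpa using this
        · obtain ⟨q, hqdef⟩ : ∃ q, q = (k + t') * d := ⟨_, rfl⟩
          have huq : u < q := by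
            have : (k + 1) * d ≤ (k + t') * d := Nat.mul_le_mul_right d (by omega)
            omega
          set s₀ := q - u with hs₀'
          have hs₀1 : 1 ≤ s₀ := by omega
          have hs₀ab : s₀ ≤ a * b := by
            have e1 : q = k * d + t' * d := by rw [hqdef]; ring
            have e2 : t' * d ≤ (a * b / d) * d := Nat.mul_le_mul_right d ht'2
            have e3 : (a * b / d) * d ≤ a * b := Nat.div_mul_le_self _ _
            omega
          obtain ⟨i, hidef⟩ : ∃ i, i = (s₀ + a - 1) / a := ⟨_, rfl⟩
          obtain ⟨r, hrdef⟩ : ∃ r, r = (s₀ + a - 1) % a := ⟨_, rfl⟩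
          obtain ⟨Y, hYdef⟩ : ∃ Y, Y = a * i := ⟨_, rfl⟩
          have hdm : Y + r = s₀ + a - 1 := by
            rw [hYdef, hidef, hrdef]; exact Nat.div_add_mod _ a
          have hrlt : r < a := by rw [hrdef]; exact Nat.mod_lt _ ha
          have hi1 : s₀ ≤ Y := by omega
          have hi2 : Y ≤ s₀ + a - 1 := by omega
          have hi3 : i ≤ b := by
            have e1 : Y < a * (b + 1) := by
              have : a * (b + 1) = a * b + a := by ring
              omega
            rw [hYdef] at e1
            have := Nat.lt_of_mul_lt_mul_left e1
            omega
          refine ⟨u + i * a, ?_, ?_, occursAt_nested hlen hpos hi3 hu3⟩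
          · have eb : (k + t') * (L * v.length) = q := by rw [hqdef, hd', hℓ]
            have hYia : Y = i * a := by rw [hYdef, Nat.mul_comm]
            omega
          · have eb : (k + t' + 1) * (L * v.length) = q + (L * v.length) := by
              rw [hqdef, hd', hℓ]; ring
            have ed : L * v.length = d := by rw [hd', hℓ]
            have hYia : Y = i * a := by rw [hYdef, Nat.mul_comm]
            omega
    · -- a > d, G = (u + t' * a)/d
      push_neg at hcase
      have hGv : G (j', t') = (u + t' * a) / d := by
        rw [hG]; simp [not_le.mpr hcase, hu']
      have ht'b : t' ≤ b := by
        rw [hc'] at ht'; simp [not_le.mpr hcase] at ht'; omega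
      have hta : t' * a ≤ a * b := by
        calc t' * a ≤ b * a := Nat.mul_le_mul_right a ht'b
          _ = a * b := by ring
      constructor
      · rw [hGv]
        have e3 : (u + t' * a) / d ≤ (N + 1) * dt / d :=
          Nat.div_le_div_right (by omega)
        omega
      · rw [hGv]
        refine ⟨u + t' * a, Nat.div_mul_le_self _ _, ?_, occursAt_nested hlen hpos ht'b hu3⟩
        rw [← Nat.div_lt_iff_lt_mul hd]
        omega
  have hfiber : ∀ jt ∈ t, ((s ×ˢ Finset.range c').filter (fun pr => G pr = jt)).card ≤ 2 := by
    intro jt _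
    obtain ⟨e', hedef⟩ : ∃ e', e' = ((jt + 1) * d - 1) / dt := ⟨_, rfl⟩
    have hcard2 : ({e', e' - 1} : Finset ℕ).card ≤ 2 :=
      le_trans (Finset.card_insert_le _ _) (by simp)
    refine le_trans (Finset.card_le_card_of_injOn Prod.fst ?_ ?_) hcard2
    · -- maps into {e', e'-1}
      rintro ⟨j', t'⟩ hpr
      rw [Finset.mem_coe, Finset.mem_filter, Finset.mem_product, hs, Finset.mem_filter,
        Finset.mem_range, Finset.mem_range] at hpr
      obtain ⟨⟨⟨hj'N, hPB⟩, ht'⟩, hGeq⟩ := hpr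
      obtain ⟨hu1, hu2, hu3⟩ := hw j' hPB
      set u := w j' with hu'
      have hj'le : j' ≤ e' ∧ e' ≤ j' + 1 := by
        by_cases hcase : a ≤ d
        · have hGv : u / d + t' = jt := by
            rw [hG] at hGeq; simpa [hcase] using hGeq
          have ht'2 : t' ≤ a * b / d := by
            rw [hc'] at ht'; simp [hcase] at ht'; omega
          obtain ⟨k, hkdef⟩ : ∃ k, k = u / d := ⟨_, rfl⟩
          have hk1 : k * d ≤ u := by rw [hkdef]; exact Nat.div_mul_le_self u d
          have hk2 : u < (k + 1) * d := by
            rw [hkdef, ← Nat.div_lt_iff_lt_mul hd]; omega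
          rw [← hkdef] at hGv
          constructor
          · -- j' ≤ e'
            rw [hedef, Nat.le_div_iff_mul_le hdt]
            have e1 : (k + 1) * d ≤ (jt + 1) * d := Nat.mul_le_mul_right d (by omega)
            omega
          · -- e' ≤ j' + 1
            rw [hedef]
            have e1 : (jt + 1) * d ≤ u + dt := by
              have f1 : jt + 1 ≤ k + c' := by rw [hc']; simp [hcase]; omega
              have f2 : (jt + 1) * d ≤ (k + c') * d := Nat.mul_le_mul_right d f1
              have f3 : (k + c') * d = k * d + c' * d := by ring
              have f4 : c' * d ≤ a * b + d := by
                rw [hc']; simp only [hcase, if_true]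
                have : (a * b / d) * d ≤ a * b := Nat.div_mul_le_self _ _
                have e : (a * b / d + 1) * d = (a * b / d) * d + d := by ring
                omega
              omega
            have e2 : u + dt < (j' + 2) * dt := by
              have : (j' + 2) * dt = (j' + 1) * dt + dt := by ring
              omega
            have : ((jt + 1) * d - 1) / dt < j' + 2 := by
              rw [Nat.div_lt_iff_lt_mul hdt]; omega
            omega
        · push_neg at hcase
          have hGv : (u + t' * a) / d = jt := by
            rw [hG] at hGeq; simpa [not_le.mpr hcase] using hGeq
          have ht'b : t' ≤ b := by
            rw [hc'] at ht'; simp [not_le.mpr hcase] at ht'; omega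
          have hta : t' * a ≤ a * b := by
            calc t' * a ≤ b * a := Nat.mul_le_mul_right a ht'b
              _ = a * b := by ring
          have hb1 : jt * d ≤ u + t' * a := by
            rw [← hGv]; exact Nat.div_mul_le_self _ _
          have hb2 : u + t' * a < (jt + 1) * d := by
            rw [← hGv, ← Nat.div_lt_iff_lt_mul hd]; omega
          constructor
          · rw [hedef, Nat.le_div_iff_mul_le hdt]
            omega
          · rw [hedef]
            have e2 : u + dt < (j' + 2) * dt := by
              have : (j' + 2) * dt = (j' + 1) * dt + dt := by ring
              omega
            have e3 : (jt + 1) * d = jt * d + d := by ring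
            have : ((jt + 1) * d - 1) / dt < j' + 2 := by
              rw [Nat.div_lt_iff_lt_mul hdt]; omega
            omega
      simp only [Finset.mem_coe, Finset.mem_insert, Finset.mem_singleton]
      omega
    · -- injective on fiber
      rintro ⟨j1, t1⟩ h1 ⟨j2, t2⟩ h2 hfst
      simp only [Finset.coe_filter, Set.mem_setOf_eq, Finset.mem_coe,
        Finset.mem_product, Finset.mem_range] at h1 h2
      simp only at hfst
      subst hfst
      obtain ⟨⟨hj1s, ht1⟩, hG1⟩ := h1
      obtain ⟨⟨_, ht2⟩, hG2⟩ := h2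
      have : t1 = t2 := by
        by_cases hcase : a ≤ d
        · rw [hG] at hG1 hG2
          simp only [hcase, if_true] at hG1 hG2
          omega
        · push_neg at hcase
          rw [hG] at hG1 hG2
          simp only [not_le.mpr hcase, if_false] at hG1 hG2
          obtain ⟨u0, hu0⟩ : ∃ u0, u0 = w j1 := ⟨_, rfl⟩
          rw [← hu0] at hG1 hG2
          have hb1 : jt * d ≤ u0 + t1 * a := by rw [← hG1]; exact Nat.div_mul_le_self _ _
          have hb2 : u0 + t1 * a < (jt + 1) * d := by
            rw [← hG1, ← Nat.div_lt_iff_lt_mul hd]; omega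
          have hb3 : jt * d ≤ u0 + t2 * a := by rw [← hG2]; exact Nat.div_mul_le_self _ _
          have hb4 : u0 + t2 * a < (jt + 1) * d := by
            rw [← hG2, ← Nat.div_lt_iff_lt_mul hd]; omega
          have hjd : (jt + 1) * d = jt * d + d := by ring
          rcases le_total t1 t2 with hle | hle
          · have e1 : (t2 - t1) * a = t2 * a - t1 * a := Nat.sub_mul _ _ _
            have e2 : (t2 - t1) * a < 1 * a := by omega
            have := Nat.lt_of_mul_lt_mul_right e2
            omega
          · have e1 : (t1 - t2) * a = t1 * a - t2 * a := Nat.sub_mul _ _ _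
            have e2 : (t1 - t2) * a < 1 * a := by omega
            have := Nat.lt_of_mul_lt_mul_right e2
            omega
      rw [this]
  have hmain := Finset.card_le_mul_card_image_of_maps_to hmaps 2 hfiber
  rw [Finset.card_product, Finset.card_range] at hmain
  calc c' * s.card = s.card * c' := by ring
    _ ≤ 2 * t.card := hmain

lemma limsup_comp_mul_le (u₁ u₂ : ℕ → ℝ) (M : ℕ → ℕ) (C : ℝ) (hC : 0 < C)
    (h1 : ∀ N, 0 ≤ u₁ N) (h2' : ∀ N, u₂ N ≤ 1)
    (hM : Tendsto M atTop atTop)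
    (hev : ∀ᶠ N in atTop, u₁ N ≤ C * u₂ (M N)) :
    limsup u₁ atTop ≤ C * limsup u₂ atTop := by
  have hb2 : IsBoundedUnder (· ≤ ·) atTop u₂ := isBoundedUnder_of ⟨1, h2'⟩
  have hcb1 : IsCoboundedUnder (· ≤ ·) atTop u₁ :=
    Filter.IsCoboundedUnder.of_frequently_ge
      ((Filter.Eventually.of_forall h1).frequently)
  refine le_of_forall_pos_le_add fun ε hε => ?_
  have hε' : 0 < ε / C := div_pos hε hC
  have hlt : limsup u₂ atTop < limsup u₂ atTop + ε / C := lt_add_of_pos_right _ hε'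
  have hev2 : ∀ᶠ N in atTop, u₂ N < limsup u₂ atTop + ε / C :=
    eventually_lt_of_limsup_lt hlt hb2
  have hev3 : ∀ᶠ N in atTop, u₂ (M N) < limsup u₂ atTop + ε / C := hM.eventually hev2
  have hfin : ∀ᶠ N in atTop, u₁ N ≤ C * limsup u₂ atTop + ε := by
    filter_upwards [hev, hev3] with N hN hN2
    have h3 : C * u₂ (M N) ≤ C * (limsup u₂ atTop + ε / C) :=
      mul_le_mul_of_nonneg_left (le_of_lt hN2) (le_of_lt hC)
    have h4 : C * (limsup u₂ atTop + ε / C) = C * limsup u₂ atTop + ε := by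
      field_simp
    linarith
  exact limsup_le_of_le hcb1 hfin

lemma rineq1 (vl tvl aR bR LR cR NR M : ℝ)
    (h1 : 1 ≤ vl) (h2 : tvl = vl + aR * bR) (h3 : 1 ≤ LR) (h4 : 1 ≤ aR) (h5 : 1 ≤ bR)
    (h6 : 1 ≤ cR) (h7 : tvl + 1 ≤ NR)
    (hM : M * vl ≤ (NR + 1) * tvl + vl)
    (hf1 : aR * bR + 1 ≤ cR * (LR * vl)) (hf2 : LR * vl ≤ cR * (LR * vl)) :
    2 * M * vl ≤ (4 * LR * vl + 8 * aR) * (cR * NR) := by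
  have hN0 : (0:ℝ) ≤ NR := by nlinarith
  have hvl : vl ≤ LR * vl := by nlinarith [mul_le_mul_of_nonneg_right h3 (by linarith : (0:ℝ) ≤ vl)]
  have htv2 : 2 * tvl ≤ 4 * (cR * (LR * vl)) := by nlinarith
  have hp1 : NR * (2 * tvl) ≤ NR * (4 * (cR * (LR * vl))) :=
    mul_le_mul_of_nonneg_left htv2 hN0
  have hac : 1 ≤ aR * cR := by nlinarith
  have hp2 : 8 * NR ≤ 8 * (aR * cR) * NR := by
    nlinarith [mul_le_mul_of_nonneg_right hac hN0]
  have htvN : tvl ≤ NR := by nlinarith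
  have hvtv : vl ≤ tvl := by nlinarith
  nlinarith [hM, hp1, hp2, htvN, hvtv, h1]

lemma rineq2 (vl tvl aR bR LR NR M : ℝ)
    (h1 : 1 ≤ vl) (h2 : tvl = vl + aR * bR) (h3 : 1 ≤ LR) (h4 : 1 ≤ aR) (h5 : 1 ≤ bR)
    (h7 : tvl + 1 ≤ NR)
    (hM : M * vl ≤ (NR + 1) * tvl + vl) :
    2 * M * vl ≤ (4 * LR * vl + 8 * aR) * ((bR + 1) * NR) := by
  have hN2 : (2:ℝ) ≤ NR := by nlinarith
  have hN0 : (0:ℝ) ≤ NR := by linarith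
  have hvl : vl ≤ LR * vl := by nlinarith [mul_le_mul_of_nonneg_right h3 (by linarith : (0:ℝ) ≤ vl)]
  have q1 : NR * vl ≤ NR * (LR * vl) := mul_le_mul_of_nonneg_left hvl hN0
  have q2 : 2 * vl ≤ NR * vl := by nlinarith
  have hab0 : (0:ℝ) ≤ aR * bR := by nlinarith
  have q3 : aR * bR ≤ aR * bR * NR := by nlinarith [mul_le_mul_of_nonneg_left hN2 hab0]
  have q4 : (0:ℝ) ≤ LR * vl * bR * NR := by
    have e1 : (0:ℝ) ≤ LR * vl := by nlinarith
    have e2 : (0:ℝ) ≤ LR * vl * bR := mul_nonneg e1 (by linarith)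
    exact mul_nonneg e2 hN0
  have q5 : (0:ℝ) ≤ aR * NR := mul_nonneg (by linarith) hN0
  have q6 : (0:ℝ) ≤ aR * bR * NR := mul_nonneg hab0 hN0
  nlinarith [hM, q1, q2, q3, q4, q5, q6]

set_option maxHeartbeats 2000000 in
/-- nested-occurrence density lemma. If `|ṽ| = |v| + ab`, `v`
begins at positions `ja` (`j = 0,…,b`) in `ṽ`, and every occurrence of `v` in
`x` is contained in an occurrence of `ṽ`, then
`D_L(v,x) ≥ D_L(ṽ,x)/(4L + 8a/|v|)` and `D_L(ṽ,x) ≥ D_L(v,x)/27`. -/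
theorem densD_loop {A : Type*} (v tv : List A) (x : ℕ → A) (a b L : ℕ)
    (ha : 0 < a) (hb : 0 < b) (hL : 0 < L) (hv : 0 < v.length)
    (hlen : tv.length = v.length + a * b)
    (hpos : ∀ j, j ≤ b → ((tv.drop (j * a)).take v.length) = v)
    (hcont : ∀ p, occursAt x v p →
      ∃ p', p' ≤ p ∧ p + v.length ≤ p' + tv.length ∧ occursAt x tv p') :
    densD L tv x / (4 * L + 8 * (a : ℝ) / v.length) ≤ densD L v x ∧
      (1 / 27 : ℝ) * densD L v x ≤ densD L tv x := by
  have hlt : 0 < tv.length := by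
    have := Nat.mul_pos ha hb
    omega
  have hvR : (0:ℝ) < (v.length : ℝ) := by exact_mod_cast hv
  have hltR : (0:ℝ) < (tv.length : ℝ) := by exact_mod_cast hlt
  have hLR : (1:ℝ) ≤ (L : ℝ) := by exact_mod_cast hL
  have haR : (1:ℝ) ≤ (a : ℝ) := by exact_mod_cast ha
  have hlR1 : (1:ℝ) ≤ (v.length : ℝ) := by exact_mod_cast hv
  have hlenR : (tv.length : ℝ) = (v.length : ℝ) + (a:ℝ)*(b:ℝ) := by exact_mod_cast hlen
  have hllt : (v.length : ℝ) ≤ (tv.length : ℝ) := by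
    have : v.length ≤ tv.length := by omega
    exact_mod_cast this
  have hC : (0:ℝ) < 4 * L + 8 * (a : ℝ) / v.length := by positivity
  have hu0 : ∀ (w : List A) (N : ℕ), 0 ≤ (sumFn L w x N : ℝ)/N := by
    intro w N; positivity
  have hu1 : ∀ (w : List A) (N : ℕ), (sumFn L w x N : ℝ)/N ≤ 1 := by
    intro w N
    rcases Nat.eq_zero_or_pos N with h|h
    · subst h; simp
    · rw [div_le_one (by exact_mod_cast h)]
      exact_mod_cast sumFn_le L w x N
  constructor
  · -- Part 1
    obtain ⟨c', hc'⟩ : ∃ c' : ℕ,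
        c' = if a ≤ L * v.length then a * b / (L * v.length) + 1 else b + 1 := ⟨_, rfl⟩
    have hc'pos : 0 < c' := by rw [hc']; split <;> exact Nat.succ_pos _
    obtain ⟨M₁, hM₁⟩ : ∃ f : ℕ → ℕ,
        f = fun N => (N + 1) * (L * tv.length) / (L * v.length) + 1 := ⟨_, rfl⟩
    have hM₁t : Tendsto M₁ atTop atTop := by
      rw [tendsto_atTop_atTop]
      intro B
      refine ⟨B * v.length, fun N hN => ?_⟩
      have h1 : B ≤ (N + 1) * (L * tv.length) / (L * v.length) := by
        rw [Nat.le_div_iff_mul_le (Nat.mul_pos hL hv)]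
        calc B * (L * v.length) = (B * v.length) * L := by ring
          _ ≤ (N + 1) * L := Nat.mul_le_mul_right L (by omega)
          _ ≤ (N + 1) * (L * tv.length) := by
              refine Nat.mul_le_mul_left _ ?_
              calc L = L * 1 := by ring
                _ ≤ L * tv.length := Nat.mul_le_mul_left L hlt
      simp only [hM₁]
      omega
    have hev : ∀ᶠ N in atTop, (sumFn L tv x N : ℝ)/N ≤
        (4 * L + 8 * (a : ℝ) / v.length) * ((sumFn L v x (M₁ N) : ℝ)/(M₁ N)) := by
      filter_upwards [eventually_ge_atTop (tv.length + 1)] with N hN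
      have hN0 : (0:ℝ) < N := by
        have : 0 < N := by omega
        exact_mod_cast this
      have hNR : (tv.length : ℝ) + 1 ≤ N := by exact_mod_cast hN
      have hM₁N : M₁ N = (N + 1) * (L * tv.length) / (L * v.length) + 1 := by rw [hM₁]
      have hM₁0 : (0:ℝ) < (M₁ N : ℝ) := by
        have : 0 < M₁ N := by rw [hM₁N]; exact Nat.succ_pos _
        exact_mod_cast this
      have hcnt := count1 v tv x a b L ha hL hv hlen hpos N
      rw [← hc', ← hM₁N] at hcnt
      have hcntR : (c' : ℝ) * (sumFn L tv x N : ℝ) ≤ 2 * (sumFn L v x (M₁ N) : ℝ) := by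
        exact_mod_cast hcnt
      -- key : 2 * M₁ N ≤ C * c' * N
      have hL0 : (L:ℝ) ≠ 0 := by positivity
      have hv0 : (v.length:ℝ) ≠ 0 := ne_of_gt hvR
      have hM₁le : (M₁ N : ℝ) ≤ ((N:ℝ) + 1) * tv.length / v.length + 1 := by
        have h1 : ((((N + 1) * (L * tv.length)) / (L * v.length) : ℕ) : ℝ) ≤
            (((N + 1) * (L * tv.length) : ℕ) : ℝ) / ((L * v.length : ℕ) : ℝ) :=
          Nat.cast_div_le
        have h2 : (((N + 1) * (L * tv.length) : ℕ) : ℝ) / ((L * v.length : ℕ) : ℝ) =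
            ((N:ℝ) + 1) * tv.length / v.length := by
          push_cast
          field_simp
        rw [h2] at h1
        have h3 : (M₁ N : ℝ) = ((((N + 1) * (L * tv.length)) / (L * v.length) : ℕ) : ℝ) + 1 := by
          rw [hM₁N]; push_cast; ring
        rw [h3]; linarith
      have hM₁lv : (M₁ N : ℝ) * v.length ≤ ((N:ℝ) + 1) * tv.length + v.length := by
        have h := mul_le_mul_of_nonneg_right hM₁le hvR.le
        have h2 : (((N:ℝ) + 1) * tv.length / v.length + 1) * v.length
            = ((N:ℝ) + 1) * tv.length + v.length := by field_simp
        linarith [h2 ▸ h]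
      have hbR : (1:ℝ) ≤ (b:ℝ) := by exact_mod_cast hb
      have keyv : 2 * (M₁ N : ℝ) * v.length ≤
          (4 * (L:ℝ) * v.length + 8 * a) * ((c' : ℝ) * N) := by
        by_cases hcase : a ≤ L * v.length
        · have hf1 : a * b + 1 ≤ c' * (L * v.length) := by
            rw [hc', if_pos hcase]
            have h3 := Nat.div_add_mod (a * b) (L * v.length)
            have h4 : a * b % (L * v.length) < L * v.length :=
              Nat.mod_lt _ (Nat.mul_pos hL hv)
            have h5 : (a * b / (L * v.length) + 1) * (L * v.length)
                = (L * v.length) * (a * b / (L * v.length)) + (L * v.length) := by ring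
            omega
          have hf2 : L * v.length ≤ c' * (L * v.length) :=
            Nat.le_mul_of_pos_left _ hc'pos
          have hf1R : (a:ℝ) * b + 1 ≤ (c':ℝ) * ((L:ℝ) * v.length) := by exact_mod_cast hf1
          have hf2R : (L:ℝ) * v.length ≤ (c':ℝ) * ((L:ℝ) * v.length) := by exact_mod_cast hf2
          have hc'R1 : (1:ℝ) ≤ (c' : ℝ) := by exact_mod_cast hc'pos
          exact rineq1 (v.length : ℝ) (tv.length : ℝ) a b L c' N (M₁ N)
            hlR1 hlenR hLR haR hbR hc'R1 hNR hM₁lv hf1R hf2R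
        · have hc'b : c' = b + 1 := by rw [hc', if_neg hcase]
          have hc'R : (c' : ℝ) = (b:ℝ) + 1 := by exact_mod_cast hc'b
          rw [hc'R]
          exact rineq2 (v.length : ℝ) (tv.length : ℝ) a b L N (M₁ N)
            hlR1 hlenR hLR haR hbR hNR hM₁lv
      have key : 2 * (M₁ N : ℝ) ≤ (4 * L + 8 * (a : ℝ) / v.length) * c' * N := by
        rw [← mul_le_mul_iff_left₀ hvR]
        calc 2 * (M₁ N : ℝ) * v.length
            ≤ (4 * (L:ℝ) * v.length + 8 * a) * ((c' : ℝ) * N) := keyv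
          _ = (4 * L + 8 * (a : ℝ) / v.length) * c' * N * v.length := by
              field_simp
      -- combine
      have hSv0 : (0:ℝ) ≤ (sumFn L v x (M₁ N) : ℝ) := by positivity
      have hc'R0 : (0:ℝ) < (c' : ℝ) := by exact_mod_cast hc'pos
      have hrw : (4 * L + 8 * (a : ℝ) / v.length) * ((sumFn L v x (M₁ N) : ℝ)/(M₁ N))
          = ((4 * L + 8 * (a : ℝ) / v.length) * (sumFn L v x (M₁ N) : ℝ))/(M₁ N) :=
        (mul_div_assoc _ _ _).symm
      rw [hrw, div_le_div_iff₀ hN0 hM₁0]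
      have h1 := mul_le_mul_of_nonneg_right hcntR hM₁0.le
      have h2 := mul_le_mul_of_nonneg_left key hSv0
      apply le_of_mul_le_mul_left _ hc'R0
      nlinarith [h1, h2]
    have hlim := limsup_comp_mul_le (fun N => (sumFn L tv x N : ℝ)/N)
      (fun N => (sumFn L v x N : ℝ)/N) M₁ _ hC (hu0 tv) (hu1 v) hM₁t hev
    rw [div_le_iff₀ hC]
    calc densD L tv x ≤ (4 * L + 8 * (a : ℝ) / v.length) * densD L v x := hlim
      _ = densD L v x * (4 * L + 8 * (a : ℝ) / v.length) := by ring
  · -- Part 2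
    obtain ⟨M₂, hM₂⟩ : ∃ f : ℕ → ℕ,
        f = fun N => N * v.length / tv.length + 1 := ⟨_, rfl⟩
    have hM₂t : Tendsto M₂ atTop atTop := by
      rw [tendsto_atTop_atTop]
      intro B
      refine ⟨B * tv.length, fun N hN => ?_⟩
      have h1 : B ≤ N * v.length / tv.length := by
        rw [Nat.le_div_iff_mul_le hlt]
        calc B * tv.length ≤ N := hN
          _ = N * 1 := by ring
          _ ≤ N * v.length := Nat.mul_le_mul_left N hv
      simp only [hM₂]
      omega
    have hev : ∀ᶠ N in atTop, (sumFn L v x N : ℝ)/N ≤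
        27 * ((sumFn L tv x (M₂ N) : ℝ)/(M₂ N)) := by
      filter_upwards [eventually_ge_atTop (tv.length + 1)] with N hN
      have hN0 : (0:ℝ) < N := by
        have : 0 < N := by omega
        exact_mod_cast this
      have hNR : (tv.length : ℝ) + 1 ≤ N := by exact_mod_cast hN
      have hM₂N : M₂ N = N * v.length / tv.length + 1 := by rw [hM₂]
      have hM₂0 : (0:ℝ) < (M₂ N : ℝ) := by
        have : 0 < M₂ N := by rw [hM₂N]; exact Nat.succ_pos _
        exact_mod_cast this
      have hcnt := count2 v tv x a b L hL hv hlen hcont N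
      rw [← hM₂N] at hcnt
      obtain ⟨m, hm⟩ : ∃ m : ℕ, m = (L * tv.length + a * b) / (L * v.length) + 2 := ⟨_, rfl⟩
      rw [← hm] at hcnt
      have hcntR : (sumFn L v x N : ℝ) ≤ (m : ℝ) * (sumFn L tv x (M₂ N) : ℝ) := by
        exact_mod_cast hcnt
      have hL0 : (0:ℝ) < (L:ℝ) := by linarith
      have hv0 : (v.length:ℝ) ≠ 0 := ne_of_gt hvR
      have hmle : (m : ℝ) ≤ 4 * tv.length / v.length := by
        have h1 : (((L * tv.length + a * b) / (L * v.length) : ℕ) : ℝ) ≤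
            ((L * tv.length + a * b : ℕ) : ℝ) / ((L * v.length : ℕ) : ℝ) :=
          Nat.cast_div_le
        have hab : (a:ℝ) * b ≤ tv.length := by rw [hlenR]; linarith
        have h2 : ((L * tv.length + a * b : ℕ) : ℝ) / ((L * v.length : ℕ) : ℝ) ≤
            (2 * (L:ℝ) * tv.length) / ((L:ℝ) * v.length) := by
          have hden : (0:ℝ) < (L:ℝ) * v.length := mul_pos (by linarith) hvR
          push_cast
          rw [div_le_div_iff₀ hden hden]
          nlinarith [hab, mul_le_mul_of_nonneg_right hLR hltR.le, hden.le,
            mul_le_mul_of_nonneg_right hab hden.le,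
            mul_le_mul_of_nonneg_right (mul_le_mul_of_nonneg_right hLR hltR.le) hden.le]
        have h4 : (2 * (L:ℝ) * tv.length) / ((L:ℝ) * v.length) = 2 * tv.length / v.length := by
          field_simp
        have h6 : (2:ℝ) ≤ 2 * tv.length / v.length := by
          rw [le_div_iff₀ hvR]; nlinarith [hllt]
        have h7 : (m:ℝ) = (((L * tv.length + a * b) / (L * v.length) : ℕ) : ℝ) + 2 := by
          rw [hm]; push_cast; ring
        rw [h7]
        have h8 : (4:ℝ) * tv.length / v.length = 2 * tv.length / v.length + 2 * tv.length / v.length := by ring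
        rw [h4] at h2
        linarith
      have hM₂le : (M₂ N : ℝ) ≤ (N : ℝ) * v.length / tv.length + 1 := by
        have h1 : ((N * v.length / tv.length : ℕ) : ℝ) ≤
            ((N * v.length : ℕ) : ℝ) / ((tv.length : ℕ) : ℝ) := Nat.cast_div_le
        have h2 : ((N * v.length : ℕ) : ℝ) / ((tv.length : ℕ) : ℝ)
            = (N : ℝ) * v.length / tv.length := by push_cast; ring
        rw [h2] at h1
        have h3 : (M₂ N : ℝ) = ((N * v.length / tv.length : ℕ) : ℝ) + 1 := by
          rw [hM₂N]; push_cast; ring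
        rw [h3]; linarith
      have key : (m : ℝ) * (M₂ N) ≤ 27 * N := by
        have hm0 : (0:ℝ) ≤ (m:ℝ) := by positivity
        have hstep : (m : ℝ) * (M₂ N) ≤ (4 * tv.length / v.length) * ((N : ℝ) * v.length / tv.length + 1) :=
          mul_le_mul hmle hM₂le hM₂0.le (by positivity)
        have hexp : (4 * (tv.length:ℝ) / v.length) * ((N : ℝ) * v.length / tv.length + 1)
            = 4 * N + 4 * tv.length / v.length := by
          field_simp
        have h8 : 4 * (tv.length:ℝ) / v.length ≤ 4 * tv.length := by
          apply div_le_self (by positivity) hlR1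
        nlinarith [hstep, hexp, h8, hNR]
      have hStv0 : (0:ℝ) ≤ (sumFn L tv x (M₂ N) : ℝ) := by positivity
      have hrw : 27 * ((sumFn L tv x (M₂ N) : ℝ)/(M₂ N))
          = (27 * (sumFn L tv x (M₂ N) : ℝ))/(M₂ N) := (mul_div_assoc _ _ _).symm
      rw [hrw, div_le_div_iff₀ hN0 hM₂0]
      nlinarith [mul_le_mul_of_nonneg_right hcntR hM₂0.le,
        mul_le_mul_of_nonneg_left key hStv0]
    have hlim := limsup_comp_mul_le (fun N => (sumFn L v x N : ℝ)/N)
      (fun N => (sumFn L tv x N : ℝ)/N) M₂ 27 (by norm_num) (hu0 v) (hu1 tv) hM₂t hev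
    have h27 : densD L v x ≤ 27 * densD L tv x := hlim
    linarith
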